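/- Let φ be a minimal action of ℤ² on a Cantor set X and let P(x), x ∈ X, be a φ-regular family of subsets of ℤ² with each P(x) nonempty. If P is locally derived from a φ-regular family Q via constant R, then P is itself φ-regular. -/

import Mathlib

open Metric

/-- The standard embedding of `ℤ²` into the Euclidean plane. -/
noncomputable def embZ2 (n : ℤ × ℤ) : EuclideanSpace ℝ (Fin 2) :=
  (WithLp.equiv 2 (Fin 2 → ℝ)).symm ![(n.1 : ℝ), (n.2 : ℝ)]

lemma embZ2_neg (n : ℤ × ℤ) : embZ2 (-n) = -embZ2 n := by
  ext i
  fin_cases i <;> simp [embZ2]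

/-- If each `P(x)` is nonempty and `P` is locally derived (with constant `R`) from a
`φ`-regular family `Q`, then `P` is itself `φ`-regular: equivariant and locally constant
on compact windows. -/
theorem stmt13 {X : Type*} [TopologicalSpace X] [CompactSpace X]
    [TopologicalSpace.MetrizableSpace X] [TotallyDisconnectedSpace X]
    (φ : ℤ × ℤ → X ≃ₜ X) (h0 : φ 0 = Homeomorph.refl X)
    (hadd : ∀ (m n : ℤ × ℤ) (x : X), φ (m + n) x = φ m (φ n x))
    (hmin : ∀ x : X, Dense (Set.range fun n : ℤ × ℤ => φ n x))
    (P Q : X → Set (EuclideanSpace ℝ (Fin 2)))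
    (hne : ∀ x, (P x).Nonempty)
    (R : ℝ) (hR : 0 < R)
    (hder : ∀ (x₁ x₂ : X) (u₁ u₂ : EuclideanSpace ℝ (Fin 2)), u₁ ∈ P x₁ →
      ((· - u₁) '' Q x₁) ∩ ball 0 R = ((· - u₂) '' Q x₂) ∩ ball 0 R → u₂ ∈ P x₂)
    (hQeq : ∀ (n : ℤ × ℤ) (x : X), Q (φ n x) = (· + embZ2 n) '' Q x)
    (hQloc : ∀ (x : X) (K : Set (EuclideanSpace ℝ (Fin 2))), IsCompact K →
      ∃ U : Set X, IsOpen U ∧ x ∈ U ∧ ∀ x' ∈ U, Q x' ∩ K = Q x ∩ K) :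
    (∀ (n : ℤ × ℤ) (x : X), P (φ n x) = (· + embZ2 n) '' P x) ∧
      (∀ (x : X) (K : Set (EuclideanSpace ℝ (Fin 2))), IsCompact K →
        ∃ U : Set X, IsOpen U ∧ x ∈ U ∧ ∀ x' ∈ U, P x' ∩ K = P x ∩ K) := by
  -- forward direction of equivariance
  have fwd : ∀ (n : ℤ × ℤ) (x : X) (u : EuclideanSpace ℝ (Fin 2)),
      u ∈ P x → u + embZ2 n ∈ P (φ n x) := by
    intro n x u hu
    refine hder x (φ n x) u (u + embZ2 n) hu ?_
    rw [hQeq n x]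
    congr 1
    ext v
    constructor
    · rintro ⟨q, hq, rfl⟩
      exact ⟨q + embZ2 n, ⟨q, hq, rfl⟩, by abel⟩
    · rintro ⟨_, ⟨q, hq, rfl⟩, rfl⟩
      exact ⟨q, hq, by simp only [add_sub_add_right_eq_sub]⟩
  constructor
  · intro n x
    ext v
    constructor
    · intro hv
      refine ⟨v + embZ2 (-n), ?_, by rw [embZ2_neg]; module⟩
      have := fwd (-n) (φ n x) v hv
      rwa [← hadd, neg_add_cancel, h0] at this
    · rintro ⟨u, hu, rfl⟩
      exact fwd n x u hu
  · intro x K hK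
    obtain ⟨C, hC⟩ := hK.isBounded.subset_closedBall 0
    obtain ⟨U, hUo, hxU, hU⟩ := hQloc x (closedBall 0 (C + R)) (isCompact_closedBall 0 _)
    refine ⟨U, hUo, hxU, fun x' hx' => ?_⟩
    have key : ∀ u ∈ K, ((· - u) '' Q x') ∩ ball 0 R = ((· - u) '' Q x) ∩ ball 0 R := by
      intro u huK
      have hu : ‖u‖ ≤ C := by simpa using hC huK
      have hQ := hU x' hx'
      ext v
      have step : ∀ S T : Set (EuclideanSpace ℝ (Fin 2)),
          S ∩ closedBall 0 (C + R) = T ∩ closedBall 0 (C + R) →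
          v ∈ ((· - u) '' S) ∩ ball 0 R → v ∈ ((· - u) '' T) ∩ ball 0 R := by
        rintro S T hST ⟨⟨q, hq, rfl⟩, hv⟩
        have hqn : q ∈ closedBall 0 (C + R) := by
          simp only [mem_closedBall, dist_zero_right] at *
          calc ‖q‖ = ‖(q - u) + u‖ := by rw [sub_add_cancel]
            _ ≤ ‖q - u‖ + ‖u‖ := norm_add_le _ _
            _ ≤ R + C := by
                have : ‖q - u‖ < R := by simpa [dist_zero_right] using hv
                linarith
            _ = C + R := by ring
        have : q ∈ T := by
          have : q ∈ T ∩ closedBall 0 (C + R) := hST ▸ ⟨hq, hqn⟩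
          exact this.1
        exact ⟨⟨q, this, rfl⟩, hv⟩
      exact ⟨step _ _ hQ, step _ _ hQ.symm⟩
    ext u
    constructor
    · rintro ⟨hu, huK⟩
      exact ⟨hder x' x u u hu (key u huK), huK⟩
    · rintro ⟨hu, huK⟩
      exact ⟨hder x x' u u hu (key u huK).symm, huK⟩
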